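/- Let G ∈ F_{q^m}[x]^{k×n} be a matrix such that, viewing its entries in F_{q^m}(x), G generates an MRD code over F_{q^m}(x)/K. Let f(x) ∈ F_{q^m}[x] be irreducible of degree r, and let Ḡ be G with entries reduced modulo f(x), viewed over F_{q^{mr}} ≅ F_{q^m}[x]/(f(x)). Then Ḡ generates an MRD code over F_{q^{mr}}/F_q if and only if det(GM) ≢ 0 mod f(x) for every n×k matrix M over F_q in column reduced echelon form of rank k. -/

import Mathlib

/-- The fixed subfield of a field automorphism. -/
def fixedSubfield {F : Type*} [Field F] (e : F ≃+* F) : Subfield F where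
  carrier := {a | e a = a}
  mul_mem' := by intro a b ha hb; simp only [Set.mem_setOf_eq, map_mul] at *; rw [ha, hb]
  one_mem' := by simp
  add_mem' := by intro a b ha hb; simp only [Set.mem_setOf_eq, map_add] at *; rw [ha, hb]
  zero_mem' := by simp
  neg_mem' := by intro a ha; simp only [Set.mem_setOf_eq, map_neg] at *; rw [ha]
  inv_mem' := by intro a ha; simp only [Set.mem_setOf_eq, map_inv₀] at *; rw [ha]

/-- A subfield of `F` acts on `AdjoinRoot f`. -/
noncomputable instance subfieldAlgebraAdjoinRoot {F : Type*} [Field F] (s : Subfield F)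
    (f : Polynomial F) : Algebra s (AdjoinRoot f) :=
  ((algebraMap F (AdjoinRoot f)).comp s.subtype).toAlgebra

/-- An n×k matrix is in column reduced echelon form with k pivots. -/
def IsCREF {F : Type*} [Field F] {n k : ℕ} (M : Matrix (Fin n) (Fin k) F) : Prop :=
  ∃ piv : Fin k → Fin n, StrictMono piv ∧
    (∀ j, M (piv j) j = 1) ∧
    (∀ (j : Fin k) (i : Fin n), (i : ℕ) < (piv j : ℕ) → M i j = 0) ∧
    (∀ j j', j' ≠ j → M (piv j) j' = 0)

/-- Columns of a matrix with a "pivot" structure are linearly independent. -/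
lemma cref_cols_linearIndependent {K : Type*} [Field K] {n k : ℕ}
    (N : Matrix (Fin n) (Fin k) K) (piv : Fin k → Fin n)
    (h1 : ∀ j, N (piv j) j = 1) (h0 : ∀ j j', j' ≠ j → N (piv j) j' = 0) :
    LinearIndependent K (fun j => (fun i => N i j) : Fin k → Fin n → K) := by
  rw [Fintype.linearIndependent_iff]
  intro a ha j
  have h := congrFun ha (piv j)
  simp only [Finset.sum_apply, Pi.smul_apply, smul_eq_mul, Pi.zero_apply] at h
  rwa [Finset.sum_eq_single j (fun j' _ hj' => by rw [h0 j j' hj', mul_zero])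
    (by simp), h1, mul_one] at h

/-- Any subspace of `K^n` of dimension at least `k` contains the columns of a matrix in
column reduced echelon form with `k` pivots. -/
lemma exists_cref {K : Type*} [Field K] {n k : ℕ} (W : Submodule K (Fin n → K))
    (hW : k ≤ Module.finrank K W) :
    ∃ N : Matrix (Fin n) (Fin k) K, IsCREF N ∧ ∀ j, (fun i => N i j) ∈ W := by
  classical
  let S : Finset (Fin n) :=
    Finset.univ.filter fun i => ∃ w ∈ W, w i ≠ 0 ∧ ∀ i', i' < i → w i' = 0
  have hinj : Function.Injective
      (LinearMap.pi (fun i : S => (LinearMap.proj (i : Fin n)).comp W.subtype)) := by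
    rw [← LinearMap.ker_eq_bot, eq_bot_iff]
    rintro ⟨w, hw⟩ hker
    rw [LinearMap.mem_ker] at hker
    rw [Submodule.mem_bot]
    by_contra hw0
    have hwne : w ≠ 0 := fun h => hw0 (Subtype.ext h)
    have hne : (Finset.univ.filter fun i => w i ≠ 0).Nonempty := by
      obtain ⟨i, hi⟩ := Function.ne_iff.mp hwne
      exact ⟨i, by simpa using hi⟩
    set ℓ := (Finset.univ.filter fun i => w i ≠ 0).min' hne with hℓdef
    have hℓmem : w ℓ ≠ 0 := by
      have := Finset.min'_mem _ hne; simpa using this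
    have hbefore : ∀ i', i' < ℓ → w i' = 0 := by
      intro i' hi'
      by_contra h
      exact absurd (Finset.min'_le _ i' (by simpa using h)) (not_le.mpr hi')
    have hℓS : ℓ ∈ S := Finset.mem_filter.mpr ⟨Finset.mem_univ _, w, hw, hℓmem, hbefore⟩
    have := congrFun hker ⟨ℓ, hℓS⟩
    simp only [LinearMap.pi_apply, LinearMap.comp_apply, LinearMap.proj_apply,
      Submodule.subtype_apply, Pi.zero_apply] at this
    exact hℓmem this
  have hcard : k ≤ S.card := by
    have h1 : Module.finrank K W ≤ Module.finrank K (S → K) :=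
      LinearMap.finrank_le_finrank_of_injective hinj
    rw [Module.finrank_pi] at h1
    simpa [Fintype.card_coe] using hW.trans h1
  obtain ⟨S', hS'sub, hS'card⟩ := Finset.exists_subset_card_eq hcard
  let piv : Fin k → Fin n := fun j => S'.orderEmbOfFin hS'card j
  have hpivmono : StrictMono piv := (S'.orderEmbOfFin hS'card).strictMono
  have hpivS : ∀ j, piv j ∈ S := fun j => hS'sub (Finset.orderEmbOfFin_mem _ _ _)
  have hchoice : ∀ j, ∃ w ∈ W, w (piv j) ≠ 0 ∧ ∀ i', i' < piv j → w i' = 0 := fun j =>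
    (Finset.mem_filter.mp (hpivS j)).2
  choose w hwW hwne hwzero using hchoice
  let u : Fin k → Fin n → K := fun j => (w j (piv j))⁻¹ • w j
  have huW : ∀ j, u j ∈ W := fun j => W.smul_mem _ (hwW j)
  have hu1 : ∀ j, u j (piv j) = 1 := fun j => by
    simp [u, inv_mul_cancel₀ (hwne j)]
  have hu0 : ∀ j i, i < piv j → u j i = 0 := fun j i hi => by
    simp [u, hwzero j i hi]
  let A : Matrix (Fin k) (Fin k) K := Matrix.of fun j j' => u j' (piv j)
  have hA : A.BlockTriangular OrderDual.toDual := fun i j hij =>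
    hu0 j (piv i) (hpivmono hij)
  have hdet : A.det = 1 := by
    rw [Matrix.det_of_lowerTriangular A hA]
    exact Finset.prod_eq_one fun j _ => hu1 j
  have : Invertible A := A.invertibleOfIsUnitDet (by rw [hdet]; exact isUnit_one)
  have hAinvT := Matrix.blockTriangular_inv_of_blockTriangular hA
  have hmul : A * A⁻¹ = 1 := A.mul_nonsing_inv (by rw [hdet]; exact isUnit_one)
  have hmulapp : ∀ j0 j, ∑ j', A⁻¹ j' j * u j' (piv j0)
      = (1 : Matrix (Fin k) (Fin k) K) j0 j := by
    intro j0 j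
    rw [← hmul, Matrix.mul_apply]
    exact Finset.sum_congr rfl fun j' _ => mul_comm _ _
  refine ⟨Matrix.of fun i jj => ∑ j', A⁻¹ j' jj * u j' i, ⟨piv, hpivmono, ?_, ?_, ?_⟩, ?_⟩
  · intro j
    rw [Matrix.of_apply, hmulapp j j, Matrix.one_apply_eq]
  · intro j i hi
    rw [Matrix.of_apply]
    apply Finset.sum_eq_zero
    intro j' _
    rcases lt_or_ge j' j with h | h
    · rw [hAinvT h, zero_mul]
    · have hip : i < piv j' := lt_of_lt_of_le (by rwa [Fin.lt_def]) (hpivmono.monotone h)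
      rw [hu0 j' i hip, mul_zero]
  · intro j j' hj'
    rw [Matrix.of_apply, hmulapp j j', Matrix.one_apply_ne' hj']
  · intro j
    have heq : (fun i => (Matrix.of fun i jj => ∑ j', A⁻¹ j' jj * u j' i) i j)
        = ∑ j' : Fin k, A⁻¹ j' j • u j' := by
      funext i
      simp [Finset.sum_apply]
    rw [heq]
    exact Submodule.sum_mem _ fun j' _ => W.smul_mem _ (huW j')

lemma subfield_smul_adjoinRoot {F : Type*} [Field F] {Fq : Subfield F} {f : Polynomial F}
    (a : ↥Fq) (z : AdjoinRoot f) : a • z = AdjoinRoot.mk f (Polynomial.C (a : F)) * z := by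
  rw [show a • z = (a : F) • z from rfl, Algebra.smul_def, AdjoinRoot.algebraMap_eq]
  rfl

lemma key_calc {F : Type*} [Field F] (Fq : Subfield F) (f : Polynomial F) {k n : ℕ}
    (G : Matrix (Fin k) (Fin n) (Polynomial F)) (x : Fin k → AdjoinRoot f)
    (M : Matrix (Fin n) (Fin k) F) (hM : ∀ i j, M i j ∈ Fq) (j : Fin k) :
    Fintype.linearCombination ↥Fq (Matrix.vecMul x (G.map (AdjoinRoot.mk f)))
        (fun i => (⟨M i j, hM i j⟩ : Fq)) =
      Matrix.vecMul x ((G * M.map Polynomial.C).map (AdjoinRoot.mk f)) j := by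
  rw [Matrix.map_mul (f := AdjoinRoot.mk f), ← Matrix.vecMul_vecMul]
  simp only [Fintype.linearCombination_apply, Matrix.vecMul, dotProduct,
    Matrix.map_apply]
  refine Finset.sum_congr rfl fun i _ => ?_
  rw [subfield_smul_adjoinRoot, mul_comm]

set_option synthInstance.maxHeartbeats 1000000 in
set_option maxHeartbeats 1000000 in
/-- Let G over F_{q^m}[x] generate an MRD code over F_{q^m}(x)/K and f be
irreducible of degree r. Then Ḡ = G mod f generates an MRD code over F_{q^{mr}}/F_q iff
det(GM) ≢ 0 mod f for every n×k matrix M over F_q of rank k in column reduced echelon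
form. -/
theorem stmt_17 (p s m r : ℕ) [Fact p.Prime] (hs : 0 < s) (hm : 0 < m)
    (F : Type*) [Field F] [Fintype F] [CharP F p]
    (q : ℕ) (hq : q = p ^ s) (hcard : Fintype.card F = q ^ m)
    (lam : F) (hlam : lam ≠ 0)
    (hnorm : orderOf (lam ^ ((q ^ m - 1) / (q - 1))) = q - 1)
    (Fq : Subfield F) (hFq : ∀ a : F, a ∈ Fq ↔ a ^ q = a)
    (n k : ℕ) (hn : n = m * (q - 1)) (hkn : k ≤ n)
    (e : RatFunc F ≃+* RatFunc F)
    (he : ∀ g : Polynomial F,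
      e (algebraMap (Polynomial F) (RatFunc F) g) =
        algebraMap (Polynomial F) (RatFunc F)
          (∑ i ∈ Finset.range (g.natDegree + 1),
            Polynomial.C ((g.coeff i) ^ q * lam ^ i) * Polynomial.X ^ i))
    (G : Matrix (Fin k) (Fin n) (Polynomial F))
    (hMRD : ∀ x : Fin k → RatFunc F, x ≠ 0 →
      n - k + 1 ≤ Module.finrank (fixedSubfield e)
        (Submodule.span (fixedSubfield e)
          (Set.range (Matrix.vecMul x
            (G.map (algebraMap (Polynomial F) (RatFunc F)))))))
    (f : Polynomial F) [hfI : Fact (Irreducible f)] (hr : f.natDegree = r) :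
    (∀ x : Fin k → AdjoinRoot f, x ≠ 0 →
      n - k + 1 ≤ Module.finrank Fq
        (Submodule.span Fq (Set.range (Matrix.vecMul x (G.map (AdjoinRoot.mk f)))))) ↔
    (∀ M : Matrix (Fin n) (Fin k) F, (∀ i j, M i j ∈ Fq) → IsCREF M →
      ¬ f ∣ (G * M.map Polynomial.C).det) := by
  classical
  have hpi : Module.finrank ↥Fq (Fin n → ↥Fq) = n := by
    rw [Module.finrank_pi, Fintype.card_fin]
  constructor
  · intro hL M hMq hcref hdvd
    have hdet0 : ((G * M.map Polynomial.C).map (AdjoinRoot.mk f)).det = 0 := by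
      rw [← RingHom.mapMatrix_apply, ← RingHom.map_det]
      exact AdjoinRoot.mk_eq_zero.mpr hdvd
    obtain ⟨x, hx0, hx⟩ := Matrix.exists_vecMul_eq_zero_iff.mpr hdet0
    have hrank := hL x hx0
    obtain ⟨piv, hmono, h1, h2, h3⟩ := hcref
    have hli : LinearIndependent ↥Fq
        (fun j => (fun i => (⟨M i j, hMq i j⟩ : Fq)) : Fin k → Fin n → ↥Fq) :=
      cref_cols_linearIndependent (Matrix.of fun i j => (⟨M i j, hMq i j⟩ : Fq)) piv
        (fun j => Subtype.ext (h1 j)) (fun j j' hj => Subtype.ext (h3 j j' hj))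
    have hker : ∀ j, (fun i => (⟨M i j, hMq i j⟩ : Fq)) ∈ LinearMap.ker
        (Fintype.linearCombination ↥Fq
          (Matrix.vecMul x (G.map (AdjoinRoot.mk f)))) := by
      intro j
      rw [LinearMap.mem_ker, key_calc Fq f G x M hMq j]
      exact congrFun hx j
    have hspan : Submodule.span ↥Fq
        (Set.range (fun j => (fun i => (⟨M i j, hMq i j⟩ : Fq)) : Fin k → Fin n → ↥Fq))
        ≤ LinearMap.ker (Fintype.linearCombination ↥Fq
          (Matrix.vecMul x (G.map (AdjoinRoot.mk f)))) :=
      Submodule.span_le.mpr (Set.range_subset_iff.mpr hker)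
    have hkfr : k ≤ Module.finrank ↥Fq (LinearMap.ker
        (Fintype.linearCombination ↥Fq
          (Matrix.vecMul x (G.map (AdjoinRoot.mk f))))) := by
      have hmle := Submodule.finrank_mono hspan
      rwa [finrank_span_eq_card hli, Fintype.card_fin] at hmle
    have hrn := LinearMap.finrank_range_add_finrank_ker
      (Fintype.linearCombination ↥Fq (Matrix.vecMul x (G.map (AdjoinRoot.mk f))))
    rw [Fintype.range_linearCombination, hpi] at hrn
    omega
  · intro hR x hx0
    by_contra hlt
    push_neg at hlt
    have hrn := LinearMap.finrank_range_add_finrank_ker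
      (Fintype.linearCombination ↥Fq (Matrix.vecMul x (G.map (AdjoinRoot.mk f))))
    rw [Fintype.range_linearCombination, hpi] at hrn
    have hkk : k ≤ Module.finrank ↥Fq (LinearMap.ker
        (Fintype.linearCombination ↥Fq
          (Matrix.vecMul x (G.map (AdjoinRoot.mk f))))) := by
      omega
    obtain ⟨N, ⟨piv, hmono, h1, h2, h3⟩, hNW⟩ := exists_cref _ hkk
    refine hR (Matrix.of fun i j => ((N i j : F))) (fun i j => (N i j).2)
      ⟨piv, hmono, fun j => by simp [h1 j], fun j i hi => by simp [h2 j i hi],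
        fun j j' hj => by simp [h3 j j' hj]⟩ ?_
    refine AdjoinRoot.mk_eq_zero.mp ?_
    rw [RingHom.map_det, RingHom.mapMatrix_apply]
    refine Matrix.exists_vecMul_eq_zero_iff.mp ⟨x, hx0, ?_⟩
    funext j
    rw [Pi.zero_apply,
      ← key_calc Fq f G x (Matrix.of fun i j => ((N i j : F))) (fun i j => (N i j).2) j]
    have hj := hNW j
    rw [LinearMap.mem_ker] at hj
    exact hj
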